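/- Let X₁ and X₂ be metric spaces and equip X₁ × X₂ with the ℓ² product metric. If γ : [0,1] → X₁ × X₂ is a geodesic with speed L, and γᵢ = πᵢ ∘ γ denotes its projection to Xᵢ (i = 1, 2), then each γᵢ is either a constant map or a geodesic in Xᵢ with some speed Lᵢ > 0; setting Lᵢ = 0 in the constant case, the speeds satisfy L₁² + L₂² = L², and in particular at least one projection is a (nonconstant) geodesic. -/

import Mathlib

/-- A map `γ : ℝ → X` (viewed on `[0,1]`) is a geodesic with speed `L` if `L > 0` and
every `t ∈ [0,1]` has a neighborhood `U ⊆ ℝ` on which `γ` is a local isometry up to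
the factor `L`: `dist (γ s) (γ s') = L * |s - s'|` for `s, s' ∈ U ∩ [0,1]`. -/
def IsGeodesicWithSpeed {X : Type*} [MetricSpace X] (γ : ℝ → X) (L : ℝ) : Prop :=
  0 < L ∧ ∀ t ∈ Set.Icc (0:ℝ) 1, ∃ U ∈ nhds t,
    ∀ s ∈ U ∩ Set.Icc (0:ℝ) 1, ∀ s' ∈ U ∩ Set.Icc (0:ℝ) 1,
      dist (γ s) (γ s') = L * |s - s'|

/-- A geodesic is a map with some positive speed. -/
def IsGeodesic {X : Type*} [MetricSpace X] (γ : ℝ → X) : Prop :=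
  ∃ L : ℝ, IsGeodesicWithSpeed γ L

/-- `B` is a blocking set for the configuration `(x, y)`: every geodesic joining `x` to `y`
has an interior point in `B`. -/
def Blocks {X : Type*} [MetricSpace X] (x y : X) (B : Set X) : Prop :=
  ∀ γ : ℝ → X, IsGeodesic γ → γ 0 = x → γ 1 = y → ∃ t ∈ Set.Ioo (0:ℝ) 1, γ t ∈ B

/-- The configuration `(x, y)` is secure: it has a finite blocking set. -/
def Secure {X : Type*} [MetricSpace X] (x y : X) : Prop :=
  ∃ B : Set X, B.Finite ∧ Blocks x y B

/-- `B` is a midpoint blocking set for `(x, y)`: every geodesic joining `x` to `y`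
has its midpoint in `B`. -/
def MidpointBlocks {X : Type*} [MetricSpace X] (x y : X) (B : Set X) : Prop :=
  ∀ γ : ℝ → X, IsGeodesic γ → γ 0 = x → γ 1 = y → γ (1/2 : ℝ) ∈ B

/-- The configuration `(x, y)` is midpoint secure: it has a finite midpoint blocking set. -/
def MidpointSecure {X : Type*} [MetricSpace X] (x y : X) : Prop :=
  ∃ B : Set X, B.Finite ∧ MidpointBlocks x y B

open Metric Set

private lemma key_arith {a b c e A B p q : ℝ} (ha : 0 ≤ a) (hb : 0 ≤ b) (hc : 0 ≤ c) (he : 0 ≤ e)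
    (hA : 0 ≤ A) (hB : 0 ≤ B) (hp : 0 ≤ p) (hq : 0 ≤ q)
    (h1 : a^2+b^2 = p^2) (h2 : c^2+e^2 = q^2) (h3 : A^2+B^2 = (p+q)^2)
    (htA : A ≤ a+c) (htB : B ≤ b+e) : A = a+c ∧ B = b+e ∧ a*q = c*p := by
  have hmul : p^2 * q^2 = (a^2+b^2) * (c^2+e^2) := by rw [h1, h2]
  have hP2 : (p*q)^2 = (a*c+b*e)^2 + (a*e-b*c)^2 := by linear_combination hmul
  have hcs : a*c+b*e ≤ p*q := by
    nlinarith [hP2, sq_nonneg (a*e - b*c), mul_nonneg hp hq,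
      add_nonneg (mul_nonneg ha hc) (mul_nonneg hb he)]
  have hsqA := pow_le_pow_left₀ hA htA 2
  have hsqB := pow_le_pow_left₀ hB htB 2
  have heq1 : a*c+b*e = p*q := by nlinarith [hsqA, hsqB, hcs]
  have hsum : A^2+B^2 = (a+c)^2+(b+e)^2 := by linear_combination h3 - h1 - h2 - 2*heq1
  have hA2 : A^2 = (a+c)^2 := by linarith
  have hB2 : B^2 = (b+e)^2 := by linarith
  have hAe : A = a+c := (pow_left_inj₀ hA (by linarith) (by norm_num)).mp hA2
  have hBe : B = b+e := (pow_left_inj₀ hB (by linarith) (by norm_num)).mp hB2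
  have haebc : a*e = b*c := by
    have h0 : (a*e-b*c)^2 = 0 := by
      linear_combination (-1:ℝ)*hP2 - (a*c+b*e+p*q)*heq1
    have h0' := pow_eq_zero_iff (n := 2) (by norm_num) |>.mp h0
    linarith [sub_eq_zero.mp h0']
  refine ⟨hAe, hBe, ?_⟩
  have hsq : (a*q)^2 = (c*p)^2 :=
    by linear_combination (-(a^2)) * h2 + c^2 * h1 + (a*e+b*c) * haebc
  exact (pow_left_inj₀ (mul_nonneg ha hq) (mul_nonneg hc hp) (by norm_num)).mp hsq

private lemma l2dist {X₁ X₂ : Type*} [MetricSpace X₁] [MetricSpace X₂]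
    (x y : WithLp 2 (X₁ × X₂)) :
    dist x y = Real.sqrt (dist x.ofLp.1 y.ofLp.1 ^ 2 + dist x.ofLp.2 y.ofLp.2 ^ 2) := by
  rw [WithLp.prod_dist_eq_add (by norm_num), Real.sqrt_eq_rpow]
  have h2 : ((2:ENNReal).toReal) = (2:ℝ) := by norm_num
  rw [h2, show ((2:ℝ)) = ((2:ℕ):ℝ) by norm_num, Real.rpow_natCast, Real.rpow_natCast]
  rfl

private lemma l2dist_sq {X₁ X₂ : Type*} [MetricSpace X₁] [MetricSpace X₂]
    (x y : WithLp 2 (X₁ × X₂)) :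
    dist x y ^ 2 = dist x.ofLp.1 y.ofLp.1 ^ 2 + dist x.ofLp.2 y.ofLp.2 ^ 2 := by
  rw [l2dist, Real.sq_sqrt (by positivity)]

private lemma pair_exists {t : ℝ} (ht : t ∈ Icc (0:ℝ) 1) {ε : ℝ} (hε : 0 < ε) :
    ∃ a b : ℝ, a < b ∧ a ∈ ball t ε ∩ Icc (0:ℝ) 1 ∧ b ∈ ball t ε ∩ Icc (0:ℝ) 1 := by
  rcases lt_or_eq_of_le ht.2 with h1 | h1
  · refine ⟨t, min (t + ε/2) 1, lt_min (by linarith) h1,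
      ⟨mem_ball_self hε, ht⟩, ⟨?_, ?_, min_le_right _ _⟩⟩
    · rw [mem_ball, Real.dist_eq, abs_lt]
      refine ⟨?_, ?_⟩
      · have := lt_min (show t < t + ε/2 by linarith) h1
        linarith
      · have := min_le_left (t + ε/2) 1
        linarith
    · have := lt_min (show t < t + ε/2 by linarith) h1
      linarith [ht.1]
  · subst h1
    refine ⟨max (1 - ε/2) 0, 1, max_lt (by linarith) (by linarith), ⟨?_, le_max_right _ _, ?_⟩,
      ⟨mem_ball_self hε, ht⟩⟩
    · rw [mem_ball, Real.dist_eq, abs_lt]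
      refine ⟨?_, ?_⟩
      · have := le_max_left (1 - ε/2) 0
        linarith
      · have := max_lt (show 1 - ε/2 < 1 by linarith) (show (0:ℝ) < 1 by norm_num)
        linarith
    · exact le_of_lt (max_lt (by linarith) (by norm_num))

private lemma locconst {α : Type*} (c : ℝ → α)
    (h : ∀ t ∈ Icc (0:ℝ) 1, ∃ ε > 0, ∀ u ∈ ball t ε ∩ Icc (0:ℝ) 1, c u = c t) :
    ∀ s ∈ Icc (0:ℝ) 1, ∀ s' ∈ Icc (0:ℝ) 1, c s = c s' := by
  choose! ε hεpos hεc using h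
  intro s hs s' hs'
  by_contra hne
  set U : Set ℝ := ⋃ t ∈ {t | t ∈ Icc (0:ℝ) 1 ∧ c t = c s}, ball t (ε t) with hU
  set V : Set ℝ := ⋃ t ∈ {t | t ∈ Icc (0:ℝ) 1 ∧ c t ≠ c s}, ball t (ε t) with hV
  have hUo : IsOpen U := isOpen_biUnion fun _ _ => isOpen_ball
  have hVo : IsOpen V := isOpen_biUnion fun _ _ => isOpen_ball
  have hcover : Icc (0:ℝ) 1 ⊆ U ∪ V := by
    intro x hx
    by_cases hc : c x = c s
    · exact Or.inl (mem_biUnion ⟨hx, hc⟩ (mem_ball_self (hεpos x hx)))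
    · exact Or.inr (mem_biUnion ⟨hx, hc⟩ (mem_ball_self (hεpos x hx)))
  have h1 : (Icc (0:ℝ) 1 ∩ U).Nonempty :=
    ⟨s, hs, mem_biUnion ⟨hs, rfl⟩ (mem_ball_self (hεpos s hs))⟩
  have h2 : (Icc (0:ℝ) 1 ∩ V).Nonempty :=
    ⟨s', hs', mem_biUnion ⟨hs', fun hcc => hne hcc.symm⟩ (mem_ball_self (hεpos s' hs'))⟩
  obtain ⟨x, hxI, hxU, hxV⟩ := isPreconnected_Icc U V hUo hVo hcover h1 h2
  obtain ⟨t₁, ht₁, hxb₁⟩ := mem_iUnion₂.mp hxU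
  obtain ⟨t₂, ht₂, hxb₂⟩ := mem_iUnion₂.mp hxV
  have e1 : c x = c t₁ := hεc t₁ ht₁.1 x ⟨hxb₁, hxI⟩
  have e2 : c x = c t₂ := hεc t₂ ht₂.1 x ⟨hxb₂, hxI⟩
  exact ht₂.2 (e2.symm.trans (e1.trans ht₁.2))

private lemma stepA {X₁ X₂ : Type*} [MetricSpace X₁] [MetricSpace X₂]
    (γ : ℝ → WithLp 2 (X₁ × X₂)) {L : ℝ} (hL : 0 < L)
    (hloc : ∀ t ∈ Icc (0:ℝ) 1, ∃ U ∈ nhds t, ∀ s ∈ U ∩ Icc (0:ℝ) 1, ∀ s' ∈ U ∩ Icc (0:ℝ) 1,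
      dist (γ s) (γ s') = L * |s - s'|) :
    ∀ t ∈ Icc (0:ℝ) 1, ∃ r : ℝ, 0 ≤ r ∧ r ≤ L ∧ ∃ ε > 0,
      ∀ s ∈ ball t ε ∩ Icc (0:ℝ) 1, ∀ s' ∈ ball t ε ∩ Icc (0:ℝ) 1,
        dist (γ s).ofLp.1 (γ s').ofLp.1 = r * |s - s'| ∧
        dist (γ s).ofLp.2 (γ s').ofLp.2 = Real.sqrt (L^2 - r^2) * |s - s'| := by
  intro t ht
  obtain ⟨U, hU, hdloc⟩ := hloc t ht
  obtain ⟨ε, hε, hball⟩ := Metric.mem_nhds_iff.mp hU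
  set W : Set ℝ := ball t ε ∩ Icc (0:ℝ) 1 with hWdef
  have hWP : ∀ s ∈ W, ∀ s' ∈ W, dist (γ s) (γ s') = L * |s - s'| := fun s hs s' hs' =>
    hdloc s ⟨hball hs.1, hs.2⟩ s' ⟨hball hs'.1, hs'.2⟩
  have hOC : W.OrdConnected := ((convex_ball t ε).inter (convex_Icc 0 1)).ordConnected
  -- the triple step
  have step : ∀ p ∈ W, ∀ m ∈ W, ∀ q ∈ W, p < m → m < q →
      dist (γ p).ofLp.1 (γ m).ofLp.1 * (q - p) = dist (γ p).ofLp.1 (γ q).ofLp.1 * (m - p) ∧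
      dist (γ m).ofLp.1 (γ q).ofLp.1 * (q - p) = dist (γ p).ofLp.1 (γ q).ofLp.1 * (q - m) := by
    intro p hp m hm q hq hpm hmq
    have e1 : dist (γ p) (γ m) = L * (m - p) := by
      rw [hWP p hp m hm, abs_of_neg (by linarith : p - m < 0)]; ring
    have e2 : dist (γ m) (γ q) = L * (q - m) := by
      rw [hWP m hm q hq, abs_of_neg (by linarith : m - q < 0)]; ring
    have e3 : dist (γ p) (γ q) = L * (q - p) := by
      rw [hWP p hp q hq, abs_of_neg (by linarith : p - q < 0)]; ring
    have s1 : dist (γ p).ofLp.1 (γ m).ofLp.1 ^2 + dist (γ p).ofLp.2 (γ m).ofLp.2 ^2 = (L*(m-p))^2 := by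
      rw [← l2dist_sq, e1]
    have s2 : dist (γ m).ofLp.1 (γ q).ofLp.1 ^2 + dist (γ m).ofLp.2 (γ q).ofLp.2 ^2 = (L*(q-m))^2 := by
      rw [← l2dist_sq, e2]
    have s3 : dist (γ p).ofLp.1 (γ q).ofLp.1 ^2 + dist (γ p).ofLp.2 (γ q).ofLp.2 ^2 = (L*(m-p) + L*(q-m))^2 := by
      rw [← l2dist_sq, e3]; ring
    obtain ⟨hAeq, -, hprop⟩ := key_arith dist_nonneg dist_nonneg dist_nonneg dist_nonneg
      dist_nonneg dist_nonneg (mul_nonneg hL.le (by linarith)) (mul_nonneg hL.le (by linarith))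
      s1 s2 s3 (dist_triangle _ _ _) (dist_triangle _ _ _)
    have hac : dist (γ p).ofLp.1 (γ m).ofLp.1 * (q - m) = dist (γ m).ofLp.1 (γ q).ofLp.1 * (m - p) := by
      apply mul_left_cancel₀ (ne_of_gt hL)
      linear_combination hprop
    constructor
    · linear_combination hac - (m - p) * hAeq
    · linear_combination -hac - (q - m) * hAeq
  -- ratio along nested pairs
  have ratC : ∀ p ∈ W, ∀ q ∈ W, ∀ x y : ℝ, p ≤ x → x < y → y ≤ q →
      dist (γ x).ofLp.1 (γ y).ofLp.1 * (q - p) = dist (γ p).ofLp.1 (γ q).ofLp.1 * (y - x) := by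
    intro p hp q hq x y hpx hxy hyq
    have hxq : x < q := lt_of_lt_of_le hxy hyq
    have hx : x ∈ W := hOC.out hp hq ⟨hpx, le_of_lt hxq⟩
    have hy : y ∈ W := hOC.out hp hq ⟨le_trans hpx (le_of_lt hxy), hyq⟩
    have h1 : dist (γ x).ofLp.1 (γ q).ofLp.1 * (q - p) = dist (γ p).ofLp.1 (γ q).ofLp.1 * (q - x) := by
      rcases eq_or_lt_of_le hpx with h | h
      · rw [← h]
      · exact (step p hp x hx q hq h hxq).2
    have h2 : dist (γ x).ofLp.1 (γ y).ofLp.1 * (q - x) = dist (γ x).ofLp.1 (γ q).ofLp.1 * (y - x) := by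
      rcases eq_or_lt_of_le hyq with h | h
      · rw [h]
      · exact (step x hx y hy q hq hxy h).1
    apply mul_right_cancel₀ (sub_ne_zero.mpr (ne_of_gt hxq))
    linear_combination (q - p) * h2 + (y - x) * h1
  -- ratio between arbitrary pairs
  have ratR : ∀ s ∈ W, ∀ s' ∈ W, ∀ u ∈ W, ∀ u' ∈ W, s < s' → u < u' →
      dist (γ s).ofLp.1 (γ s').ofLp.1 * (u' - u) = dist (γ u).ofLp.1 (γ u').ofLp.1 * (s' - s) := by
    intro s hs s' hs' u hu u' hu' hss' huu'
    have hp : min s u ∈ W := by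
      rcases le_total s u with h | h
      · rwa [min_eq_left h]
      · rwa [min_eq_right h]
    have hq : max s' u' ∈ W := by
      rcases le_total s' u' with h | h
      · rwa [max_eq_right h]
      · rwa [max_eq_left h]
    have e1 := ratC _ hp _ hq s s' (min_le_left _ _) hss' (le_max_left _ _)
    have e2 := ratC _ hp _ hq u u' (min_le_right _ _) huu' (le_max_right _ _)
    have hpq : min s u < max s' u' :=
      lt_of_le_of_lt (min_le_left _ _) (lt_of_lt_of_le hss' (le_max_left _ _))
    apply mul_right_cancel₀ (sub_ne_zero.mpr (ne_of_gt hpq))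
    linear_combination (u' - u) * e1 - (s' - s) * e2
  -- choose base pair
  obtain ⟨a0, b0, hab, ha0, hb0⟩ := pair_exists ht hε
  set r : ℝ := dist (γ a0).ofLp.1 (γ b0).ofLp.1 / (b0 - a0) with hrdef
  have hab' : (0:ℝ) < b0 - a0 := by linarith
  have hr0 : 0 ≤ r := div_nonneg dist_nonneg (le_of_lt hab')
  have hd1le : ∀ x y : WithLp 2 (X₁ × X₂), dist x.ofLp.1 y.ofLp.1 ≤ dist x y := by
    intro x y
    nlinarith [l2dist_sq x y, dist_nonneg (x := x) (y := y), dist_nonneg (x := x.ofLp.1) (y := y.ofLp.1),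
      dist_nonneg (x := x.ofLp.2) (y := y.ofLp.2), sq_nonneg (dist x y - dist x.ofLp.1 y.ofLp.1)]
  have hrL : r ≤ L := by
    rw [hrdef, div_le_iff₀ hab']
    calc dist (γ a0).ofLp.1 (γ b0).ofLp.1 ≤ dist (γ a0) (γ b0) := hd1le _ _
      _ = L * |a0 - b0| := hWP a0 ha0 b0 hb0
      _ = L * (b0 - a0) := by rw [abs_of_neg (by linarith : a0 - b0 < 0)]; ring
  have hL2r : 0 ≤ L^2 - r^2 := by nlinarith
  -- main claim for ordered pairs
  have main : ∀ s ∈ W, ∀ s' ∈ W, s < s' →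
      dist (γ s).ofLp.1 (γ s').ofLp.1 = r * (s' - s) ∧
      dist (γ s).ofLp.2 (γ s').ofLp.2 = Real.sqrt (L^2 - r^2) * (s' - s) := by
    intro s hs s' hs' hss'
    have h1 := ratR s hs s' hs' a0 ha0 b0 hb0 hss' hab
    have hd1 : dist (γ s).ofLp.1 (γ s').ofLp.1 = r * (s' - s) := by
      rw [hrdef]; field_simp; linear_combination h1
    refine ⟨hd1, ?_⟩
    have htot : dist (γ s) (γ s') = L * (s' - s) := by
      rw [hWP s hs s' hs', abs_of_neg (by linarith : s - s' < 0)]; ring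
    have hsq : dist (γ s).ofLp.2 (γ s').ofLp.2 ^ 2 = (L^2 - r^2) * (s' - s)^2 := by
      have := l2dist_sq (γ s) (γ s')
      rw [htot, hd1] at this
      nlinarith [this]
    have : dist (γ s).ofLp.2 (γ s').ofLp.2 = Real.sqrt ((L^2 - r^2) * (s' - s)^2) := by
      rw [← hsq, Real.sqrt_sq dist_nonneg]
    rw [this, Real.sqrt_mul hL2r, Real.sqrt_sq (by linarith : (0:ℝ) ≤ s' - s)]
  refine ⟨r, hr0, hrL, ε, hε, ?_⟩
  intro s hs s' hs'
  rcases lt_trichotomy s s' with h | h | h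
  · obtain ⟨m1, m2⟩ := main s hs s' hs' h
    rw [abs_of_neg (by linarith : s - s' < 0)]
    exact ⟨by rw [m1]; ring, by rw [m2]; ring⟩
  · subst h
    simp [dist_self]
  · obtain ⟨m1, m2⟩ := main s' hs' s hs h
    rw [abs_of_pos (by linarith : (0:ℝ) < s - s'), dist_comm ((γ s).ofLp.1), dist_comm ((γ s).ofLp.2)]
    exact ⟨by rw [m1], by rw [m2]⟩

/-- The projections of a geodesic in an ℓ² product are each either constant (on `[0,1]`)
or a geodesic; the speeds (with `0` for constant projections) satisfy `L₁² + L₂² = L²`,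
and at least one projection is a (nonconstant) geodesic. -/
theorem stmt4 {X₁ X₂ : Type*} [MetricSpace X₁] [MetricSpace X₂]
    (γ : ℝ → WithLp 2 (X₁ × X₂)) (L : ℝ) (hγ : IsGeodesicWithSpeed γ L) :
    ∃ L₁ L₂ : ℝ, 0 ≤ L₁ ∧ 0 ≤ L₂ ∧
      ((L₁ = 0 ∧ ∀ s ∈ Set.Icc (0:ℝ) 1, ∀ s' ∈ Set.Icc (0:ℝ) 1,
          (WithLp.equiv 2 (X₁ × X₂) (γ s)).1 = (WithLp.equiv 2 (X₁ × X₂) (γ s')).1) ∨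
        (0 < L₁ ∧ IsGeodesicWithSpeed (fun t => (WithLp.equiv 2 (X₁ × X₂) (γ t)).1) L₁)) ∧
      ((L₂ = 0 ∧ ∀ s ∈ Set.Icc (0:ℝ) 1, ∀ s' ∈ Set.Icc (0:ℝ) 1,
          (WithLp.equiv 2 (X₁ × X₂) (γ s)).2 = (WithLp.equiv 2 (X₁ × X₂) (γ s')).2) ∨
        (0 < L₂ ∧ IsGeodesicWithSpeed (fun t => (WithLp.equiv 2 (X₁ × X₂) (γ t)).2) L₂)) ∧
      L₁ ^ 2 + L₂ ^ 2 = L ^ 2 ∧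
      (IsGeodesic (fun t => (WithLp.equiv 2 (X₁ × X₂) (γ t)).1) ∨
        IsGeodesic (fun t => (WithLp.equiv 2 (X₁ × X₂) (γ t)).2)) := by
  obtain ⟨hL, hloc⟩ := hγ
  have h0I : (0:ℝ) ∈ Icc (0:ℝ) 1 := ⟨le_refl 0, by norm_num⟩
  have hA := stepA γ hL hloc
  choose! r hr0 hrL ε hεpos hprop using hA
  have hrc : ∀ s ∈ Icc (0:ℝ) 1, ∀ s' ∈ Icc (0:ℝ) 1, r s = r s' := by
    apply locconst
    intro t ht
    refine ⟨ε t, hεpos t ht, ?_⟩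
    intro u hu
    have huI : u ∈ Icc (0:ℝ) 1 := hu.2
    have hop : IsOpen (ball u (ε u) ∩ ball t (ε t)) := isOpen_ball.inter isOpen_ball
    obtain ⟨δ, hδ, hsub⟩ := Metric.isOpen_iff.mp hop u ⟨mem_ball_self (hεpos u huI), hu.1⟩
    obtain ⟨a, b, hab, haW, hbW⟩ := pair_exists huI hδ
    have h1 := (hprop u huI a ⟨(hsub haW.1).1, haW.2⟩ b ⟨(hsub hbW.1).1, hbW.2⟩).1
    have h2 := (hprop t ht a ⟨(hsub haW.1).2, haW.2⟩ b ⟨(hsub hbW.1).2, hbW.2⟩).1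
    have h3 : r u * |a - b| = r t * |a - b| := h1.symm.trans h2
    have habne : |a - b| ≠ 0 := abs_ne_zero.mpr (sub_ne_zero.mpr (ne_of_lt hab))
    exact mul_right_cancel₀ habne h3
  set L₁ := r 0 with hL₁def
  have hL₁0 : 0 ≤ L₁ := hr0 0 h0I
  have hL₁L : L₁ ≤ L := hrL 0 h0I
  have hL2nn : 0 ≤ L^2 - L₁^2 := by nlinarith
  set L₂ := Real.sqrt (L^2 - L₁^2) with hL₂def
  have hL₂sq : L₂^2 = L^2 - L₁^2 := Real.sq_sqrt hL2nn
  have hL₂0 : 0 ≤ L₂ := Real.sqrt_nonneg _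
  have hprop' : ∀ t ∈ Icc (0:ℝ) 1, ∀ s ∈ ball t (ε t) ∩ Icc (0:ℝ) 1,
      ∀ s' ∈ ball t (ε t) ∩ Icc (0:ℝ) 1,
      dist (γ s).ofLp.1 (γ s').ofLp.1 = L₁ * |s - s'| ∧ dist (γ s).ofLp.2 (γ s').ofLp.2 = L₂ * |s - s'| := by
    intro t ht s hs s' hs'
    have h := hprop t ht s hs s' hs'
    rw [show r t = L₁ from hrc t ht 0 h0I] at h
    exact h
  have hf : 0 < L₁ → IsGeodesicWithSpeed (fun u => (γ u).ofLp.1) L₁ := fun h =>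
    ⟨h, fun t ht => ⟨ball t (ε t), ball_mem_nhds t (hεpos t ht),
      fun s hs s' hs' => (hprop' t ht s hs s' hs').1⟩⟩
  have hg : 0 < L₂ → IsGeodesicWithSpeed (fun u => (γ u).ofLp.2) L₂ := fun h =>
    ⟨h, fun t ht => ⟨ball t (ε t), ball_mem_nhds t (hεpos t ht),
      fun s hs s' hs' => (hprop' t ht s hs s' hs').2⟩⟩
  have hfc : L₁ = 0 → ∀ s ∈ Icc (0:ℝ) 1, ∀ s' ∈ Icc (0:ℝ) 1, (γ s).ofLp.1 = (γ s').ofLp.1 := by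
    intro h
    apply locconst (fun u => (γ u).ofLp.1)
    intro t ht
    refine ⟨ε t, hεpos t ht, fun u hu => ?_⟩
    have hd := (hprop' t ht u hu t ⟨mem_ball_self (hεpos t ht), ht⟩).1
    rw [h, zero_mul] at hd
    exact dist_eq_zero.mp hd
  have hgc : L₂ = 0 → ∀ s ∈ Icc (0:ℝ) 1, ∀ s' ∈ Icc (0:ℝ) 1, (γ s).ofLp.2 = (γ s').ofLp.2 := by
    intro h
    apply locconst (fun u => (γ u).ofLp.2)
    intro t ht
    refine ⟨ε t, hεpos t ht, fun u hu => ?_⟩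
    have hd := (hprop' t ht u hu t ⟨mem_ball_self (hεpos t ht), ht⟩).2
    rw [h, zero_mul] at hd
    exact dist_eq_zero.mp hd
  refine ⟨L₁, L₂, hL₁0, hL₂0, ?_, ?_, ?_, ?_⟩
  · rcases eq_or_lt_of_le hL₁0 with h | h
    · exact Or.inl ⟨h.symm, fun s hs s' hs' => hfc h.symm s hs s' hs'⟩
    · exact Or.inr ⟨h, hf h⟩
  · rcases eq_or_lt_of_le hL₂0 with h | h
    · exact Or.inl ⟨h.symm, fun s hs s' hs' => hgc h.symm s hs s' hs'⟩
    · exact Or.inr ⟨h, hg h⟩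
  · rw [hL₂sq]; ring
  · rcases eq_or_lt_of_le hL₁0 with h | h
    · have hL₂L : L₂ = L := by
        rw [hL₂def, ← h]
        simp [Real.sqrt_sq hL.le]
      exact Or.inr ⟨L₂, hg (by rw [hL₂L]; exact hL)⟩
    · exact Or.inl ⟨L₁, hf h⟩
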